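/- Let X be a measurable space with a σ-finite measure λ, let a < b, and let t ↦ ρ_t be a continuously differentiable curve from [a, b] into L¹(X, λ) (differentiability in the L¹-norm), such that for each t one has ρ_t ≥ 0 λ-a.e. and ∫_X ρ_t dλ = 1. Assume that for each t ∈ [a, b] there is a measurable function h_t with ρ̇_t = h_t ρ_t λ-a.e. and ∫_X h_t² ρ_t dλ < ∞, where ρ̇_t denotes the L¹-derivative of the curve at t. Then ∫_X |ρ_b − ρ_a| dλ ≤ ∫_a^b ( ∫_X h_t² ρ_t dλ )^{1/2} dt. -/

import Mathlib

open MeasureTheory Set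

/-- Cauchy–Schwarz step: the L¹-norm of the derivative is bounded by the Fisher norm. -/
lemma fisher_pointwise_bound
    {X : Type*} [MeasurableSpace X] (μ : Measure X)
    (u v : Lp ℝ 1 μ) (hpos : 0 ≤ᵐ[μ] (u : X → ℝ))
    (hone : ∫ x, (u : X → ℝ) x ∂μ = 1)
    (h : X → ℝ) (hmeas : Measurable h)
    (hlog : (v : X → ℝ) =ᵐ[μ] fun x => h x * (u : X → ℝ) x)
    (hfin : Integrable (fun x => (h x) ^ 2 * (u : X → ℝ) x) μ) :
    ‖v‖ ≤ Real.sqrt (∫ x, (h x) ^ 2 * (u : X → ℝ) x ∂μ) := by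
  set F : X → ℝ := fun x => |h x| * Real.sqrt ((u : X → ℝ) x) with hFdef
  set G : X → ℝ := fun x => Real.sqrt ((u : X → ℝ) x) with hGdef
  have humeas : AEStronglyMeasurable (u : X → ℝ) μ := Lp.aestronglyMeasurable u
  have hGmeas : AEStronglyMeasurable G μ :=
    Real.continuous_sqrt.comp_aestronglyMeasurable humeas
  have hFmeas : AEStronglyMeasurable F μ :=
    (hmeas.abs.aestronglyMeasurable).mul hGmeas
  have hsq : ∀ᵐ x ∂μ, Real.sqrt ((u : X → ℝ) x) ^ 2 = (u : X → ℝ) x :=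
    hpos.mono fun x hx => Real.sq_sqrt hx
  have hF2 : MemLp F 2 μ := by
    rw [memLp_two_iff_integrable_sq hFmeas]
    apply hfin.congr
    filter_upwards [hsq] with x hx
    simp only [hFdef, mul_pow, sq_abs, hx]
  have huint : Integrable (u : X → ℝ) μ := L1.integrable_coeFn u
  have hG2 : MemLp G 2 μ := by
    rw [memLp_two_iff_integrable_sq hGmeas]
    exact huint.congr (hsq.mono fun x hx => hx.symm)
  set Ft : Lp ℝ 2 μ := hF2.toLp F with hFt
  set Gt : Lp ℝ 2 μ := hG2.toLp G with hGt
  have hinner : inner ℝ Ft Gt = ∫ x, F x * G x ∂μ := by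
    rw [L2.inner_def]
    refine integral_congr_ae ?_
    filter_upwards [hF2.coeFn_toLp, hG2.coeFn_toLp] with x hx hy
    simp [hFt, hGt, hx, hy, RCLike.inner_apply, mul_comm]
  have hFF : (inner ℝ Ft Ft : ℝ) = ∫ x, (h x) ^ 2 * (u : X → ℝ) x ∂μ := by
    rw [L2.inner_def]
    refine integral_congr_ae ?_
    filter_upwards [hF2.coeFn_toLp, hsq] with x hx hs
    simp only [hFt, hx]
    simp only [hx, RCLike.inner_apply, starRingEnd_apply, star_trivial, hFdef]
    ring_nf
    rw [hs, sq_abs, mul_comm]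
  have hGG : (inner ℝ Gt Gt : ℝ) = 1 := by
    rw [L2.inner_def]
    rw [show (1 : ℝ) = ∫ x, (u : X → ℝ) x ∂μ from hone.symm]
    refine integral_congr_ae ?_
    filter_upwards [hG2.coeFn_toLp, hsq] with x hx hs
    simp only [hGt, hx]
    simp only [hx, RCLike.inner_apply, starRingEnd_apply, star_trivial, hGdef]
    rw [← sq, hs]
  have hnormF : ‖Ft‖ = Real.sqrt (∫ x, (h x) ^ 2 * (u : X → ℝ) x ∂μ) := by
    rw [norm_eq_sqrt_real_inner, hFF]
  have hnormG : ‖Gt‖ = 1 := by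
    rw [norm_eq_sqrt_real_inner, hGG, Real.sqrt_one]
  have hnv : ‖v‖ = ∫ x, F x * G x ∂μ := by
    rw [L1.norm_eq_integral_norm]
    refine integral_congr_ae ?_
    filter_upwards [hlog, hpos, hsq] with x hx hp hs
    simp only [hx, Real.norm_eq_abs, abs_mul, hFdef, hGdef]
    rw [abs_of_nonneg hp, mul_assoc, ← sq, hs]
  calc ‖v‖ = inner ℝ Ft Gt := by rw [hnv, hinner]
    _ ≤ ‖Ft‖ * ‖Gt‖ := real_inner_le_norm Ft Gt
    _ = Real.sqrt (∫ x, (h x) ^ 2 * (u : X → ℝ) x ∂μ) := by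
        rw [hnormF, hnormG, mul_one]

/-- Total variation distance is bounded by Fisher length: if `t ↦ ρ_t` is a continuously
differentiable curve `[a, b] → L¹(X, μ)` of probability densities (w.r.t. a σ-finite
measure `μ`), whose `L¹`-derivative `ρ̇_t` has logarithmic representation `h_t` (i.e.
`ρ̇_t = h_t ρ_t` a.e.) with finite Fisher norm `∫ h_t² ρ_t dμ < ∞`, then
`∫ |ρ_b - ρ_a| dμ ≤ ∫_a^b (∫ h_t² ρ_t dμ)^{1/2} dt`. -/
theorem tv_distance_le_fisher_length
    {X : Type*} [MeasurableSpace X] (μ : Measure X) [SigmaFinite μ]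
    (a b : ℝ) (hab : a < b)
    (ρ ρ' : ℝ → Lp ℝ 1 μ)
    (hderiv : ∀ t ∈ Set.Icc a b, HasDerivWithinAt ρ (ρ' t) (Set.Icc a b) t)
    (hcont : ContinuousOn ρ' (Set.Icc a b))
    (hpos : ∀ t ∈ Set.Icc a b, 0 ≤ᵐ[μ] (ρ t : X → ℝ))
    (hone : ∀ t ∈ Set.Icc a b, ∫ x, (ρ t : X → ℝ) x ∂μ = 1)
    (h : ℝ → X → ℝ) (hmeas : ∀ t, Measurable (h t))
    (hlog : ∀ t ∈ Set.Icc a b,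
      (ρ' t : X → ℝ) =ᵐ[μ] fun x => h t x * (ρ t : X → ℝ) x)
    (hfin : ∀ t ∈ Set.Icc a b,
      Integrable (fun x => (h t x) ^ 2 * (ρ t : X → ℝ) x) μ) :
    ENNReal.ofReal (∫ x, |(ρ b : X → ℝ) x - (ρ a : X → ℝ) x| ∂μ)
      ≤ ∫⁻ t in Set.Icc a b,
          ENNReal.ofReal (Real.sqrt (∫ x, (h t x) ^ 2 * (ρ t : X → ℝ) x ∂μ)) := by
  have key : ∀ t ∈ Set.Icc a b,
      ‖ρ' t‖ ≤ Real.sqrt (∫ x, (h t x) ^ 2 * (ρ t : X → ℝ) x ∂μ) := fun t ht =>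
    fisher_pointwise_bound μ (ρ t) (ρ' t) (hpos t ht) (hone t ht) (h t) (hmeas t)
      (hlog t ht) (hfin t ht)
  -- FTC
  have hcontρ : ContinuousOn ρ (Set.Icc a b) := fun t ht =>
    (hderiv t ht).continuousWithinAt
  have hderiv' : ∀ t ∈ Set.Ioo a b, HasDerivWithinAt ρ (ρ' t) (Set.Ioi t) t := fun t ht =>
    ((hderiv t (Set.Ioo_subset_Icc_self ht)).hasDerivAt
      (Icc_mem_nhds ht.1 ht.2)).hasDerivWithinAt
  have hint : IntervalIntegrable ρ' MeasureTheory.volume a b := by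
    apply ContinuousOn.intervalIntegrable
    rwa [Set.uIcc_of_le hab.le]
  have hFTC : ∫ t in a..b, ρ' t = ρ b - ρ a :=
    intervalIntegral.integral_eq_sub_of_hasDeriv_right_of_le hab.le hcontρ hderiv' hint
  have h1 : ∫ x, |(ρ b : X → ℝ) x - (ρ a : X → ℝ) x| ∂μ = ‖ρ b - ρ a‖ := by
    rw [L1.norm_eq_integral_norm]
    refine integral_congr_ae ?_
    filter_upwards [Lp.coeFn_sub (ρ b) (ρ a)] with x hx
    rw [hx]
    simp [Real.norm_eq_abs]
  have h2 : ‖ρ b - ρ a‖ ≤ ∫ t in a..b, ‖ρ' t‖ := by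
    rw [← hFTC]
    exact intervalIntegral.norm_integral_le_integral_norm hab.le
  have h3 : ∫ t in a..b, ‖ρ' t‖ = ∫ t in Set.Ioc a b, ‖ρ' t‖ :=
    intervalIntegral.integral_of_le hab.le
  have hnormint : IntegrableOn (fun t => ‖ρ' t‖) (Set.Ioc a b) MeasureTheory.volume :=
    hint.norm.1
  calc ENNReal.ofReal (∫ x, |(ρ b : X → ℝ) x - (ρ a : X → ℝ) x| ∂μ)
      = ENNReal.ofReal ‖ρ b - ρ a‖ := by rw [h1]
    _ ≤ ENNReal.ofReal (∫ t in Set.Ioc a b, ‖ρ' t‖) :=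
        ENNReal.ofReal_le_ofReal (h3 ▸ h2)
    _ = ∫⁻ t in Set.Ioc a b, ENNReal.ofReal ‖ρ' t‖ :=
        ofReal_integral_eq_lintegral_ofReal hnormint
          (Filter.Eventually.of_forall fun t => norm_nonneg _)
    _ ≤ ∫⁻ t in Set.Icc a b, ENNReal.ofReal ‖ρ' t‖ :=
        lintegral_mono_set Set.Ioc_subset_Icc_self
    _ ≤ ∫⁻ t in Set.Icc a b,
          ENNReal.ofReal (Real.sqrt (∫ x, (h t x) ^ 2 * (ρ t : X → ℝ) x ∂μ)) := by
        refine lintegral_mono_ae ?_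
        rw [ae_restrict_iff' measurableSet_Icc]
        exact Filter.Eventually.of_forall fun t ht =>
          ENNReal.ofReal_le_ofReal (key t ht)
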